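/- If two symmetric bba's m_a = (a, a, 1-2a) and m_b = (b, b, 1-2b) on {θ1, θ2} are combined by Dempster's rule, the combined bba remains symmetric and its pignistic entropy equals log 2; hence the pignistic-entropy criterion cannot distinguish any two symmetric track hypotheses. -/

import Mathlib

/-- Dempster conflict factor between two bba's on {θ1, θ2}. -/
def conflict (m1 m2 : ℝ × ℝ × ℝ) : ℝ := m1.1 * m2.2.1 + m1.2.1 * m2.1

/-- Dempster's rule of combination on {θ1, θ2}. -/
noncomputable def dempster (m1 m2 : ℝ × ℝ × ℝ) : ℝ × ℝ × ℝ :=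
  ((m1.1 * m2.1 + m1.1 * m2.2.2 + m1.2.2 * m2.1) / (1 - conflict m1 m2),
   (m1.2.1 * m2.2.1 + m1.2.1 * m2.2.2 + m1.2.2 * m2.2.1) / (1 - conflict m1 m2),
   (m1.2.2 * m2.2.2) / (1 - conflict m1 m2))

/-- Pignistic entropy of a bba (x, y, u) on {θ1, θ2}. -/
noncomputable def HbetP (m : ℝ × ℝ × ℝ) : ℝ :=
  -((m.1 + m.2.2 / 2) * Real.log (m.1 + m.2.2 / 2))
    - (m.2.1 + m.2.2 / 2) * Real.log (m.2.1 + m.2.2 / 2)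

theorem stmt17 (a b : ℝ) (ha : 0 ≤ a) (ha' : a ≤ 1/2) (hb : 0 ≤ b) (hb' : b ≤ 1/2)
    (hk : 2 * a * b < 1) :
    (dempster (a, a, 1 - 2*a) (b, b, 1 - 2*b)).1
      = (dempster (a, a, 1 - 2*a) (b, b, 1 - 2*b)).2.1 ∧
    HbetP (dempster (a, a, 1 - 2*a) (b, b, 1 - 2*b)) = Real.log 2 := by
  have hd : (1 : ℝ) - (a * b + a * b) ≠ 0 := by nlinarith
  simp only [dempster, conflict, HbetP]
  have h1 : (a * b + a * (1 - 2*b) + (1 - 2*a) * b) / (1 - (a * b + a * b))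
      + (1 - 2*a) * (1 - 2*b) / (1 - (a * b + a * b)) / 2 = 1/2 := by
    rw [div_div, div_add_div _ _ hd (mul_ne_zero hd (by norm_num)), div_eq_iff (mul_ne_zero hd (mul_ne_zero hd (by norm_num)))]
    ring
  constructor
  · trivial
  · rw [h1]
    rw [show (1:ℝ)/2 = 2⁻¹ by norm_num, Real.log_inv]
    ring
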